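/- Let p be a prime with p ≡ 3 (mod 4), and let q be a prime with q ≡ 1 (mod 4) such that q^2 ≡ 1 (mod p). Let α, β be integers with α^2 + β^2 = q and suppose 4·α^2 ≡ q·(q+1)^2 (mod p). Then q ≡ 1 (mod p), α^2 ≡ 1 (mod p), and p ∣ β. -/

import Mathlib

theorem arithmetic_deduction_first_case (p q : ℕ) (hp : p.Prime) (hq : q.Prime)
    (hp4 : p % 4 = 3) (hq4 : q % 4 = 1)
    (hq2 : (q : ℤ) ^ 2 ≡ 1 [ZMOD p])
    (α β : ℤ) (hαβ : α ^ 2 + β ^ 2 = (q : ℤ))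
    (hcong : 4 * α ^ 2 ≡ (q : ℤ) * ((q : ℤ) + 1) ^ 2 [ZMOD p]) :
    (q : ℤ) ≡ 1 [ZMOD p] ∧ α ^ 2 ≡ 1 [ZMOD p] ∧ (p : ℤ) ∣ β := by
  haveI : Fact p.Prime := ⟨hp⟩
  have hp2 : p ≠ 2 := by omega
  have h2 : (2 : ZMod p) ≠ 0 := by
    intro h
    have hd := (ZMod.natCast_eq_zero_iff 2 p).mp (by exact_mod_cast h)
    exact hp2 ((Nat.prime_dvd_prime_iff_eq hp Nat.prime_two).mp hd)
  have h4 : (4 : ZMod p) ≠ 0 := by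
    intro h
    apply h2
    have : (2 : ZMod p) * 2 = 0 := by rw [show (2:ZMod p)*2 = 4 by norm_num, h]
    rcases mul_eq_zero.mp this with h' | h' <;> exact h'
  -- cast hypotheses to ZMod p
  have hq2' : ((q : ℤ) : ZMod p) ^ 2 = 1 := by
    have := (ZMod.intCast_eq_intCast_iff _ _ _).mpr hq2
    push_cast at this
    exact_mod_cast this
  have hcong' : 4 * ((α : ZMod p)) ^ 2 = ((q : ℤ) : ZMod p) * (((q : ℤ) : ZMod p) + 1) ^ 2 := by
    have := (ZMod.intCast_eq_intCast_iff _ _ _).mpr hcong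
    push_cast at this ⊢
    exact this
  have hαβ' : (α : ZMod p) ^ 2 + (β : ZMod p) ^ 2 = ((q : ℤ) : ZMod p) := by
    have : ((α ^ 2 + β ^ 2 : ℤ) : ZMod p) = (((q : ℤ)) : ZMod p) := by rw [hαβ]
    push_cast at this ⊢
    exact this
  set Q : ZMod p := ((q : ℤ) : ZMod p) with hQ
  have hcases : (Q - 1) * (Q + 1) = 0 := by ring_nf; linear_combination hq2'
  rcases mul_eq_zero.mp hcases with h | h
  · -- Q = 1
    have hQ1 : Q = 1 := by linear_combination h
    have hα1 : (α : ZMod p) ^ 2 = 1 := by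
      have h40 : 4 * ((α : ZMod p) ^ 2 - 1) = 0 := by rw [mul_sub, hcong', hQ1]; ring
      rcases mul_eq_zero.mp h40 with h' | h'
      · exact absurd h' h4
      · linear_combination h' 
    have hβ0 : (β : ZMod p) ^ 2 = 0 := by
      rw [hQ1, hα1] at hαβ'; linear_combination hαβ'
    refine ⟨?_, ?_, ?_⟩
    · exact (ZMod.intCast_eq_intCast_iff _ _ _).mp (by push_cast [hQ] at hQ1 ⊢; exact_mod_cast hQ1)
    · exact (ZMod.intCast_eq_intCast_iff _ _ _).mp (by push_cast; exact hα1)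
    · rw [← ZMod.intCast_zmod_eq_zero_iff_dvd]
      exact pow_eq_zero_iff (n := 2) (by norm_num) |>.mp hβ0
  · -- Q = -1, contradiction
    exfalso
    have hQm1 : Q = -1 := by linear_combination h
    have hα0 : (α : ZMod p) ^ 2 = 0 := by
      have : 4 * ((α : ZMod p)) ^ 2 = 0 := by rw [hcong', hQm1]; ring
      rcases mul_eq_zero.mp this with h' | h'
      · exact absurd h' h4
      · exact h'
    have hβsq : (β : ZMod p) ^ 2 = -1 := by
      rw [hα0, hQm1] at hαβ'; linear_combination hαβ'
    have : IsSquare (-1 : ZMod p) := ⟨(β : ZMod p), by rw [← hβsq]; ring⟩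
    rw [ZMod.exists_sq_eq_neg_one_iff] at this
    exact this hp4
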